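/- Every element w ∈ W̃ lies in ^ΣW ∩ W^Σ, i.e. it is a minimal-length representative of its double coset W_Σ w W_Σ, and distinct elements of W̃ lie in distinct double cosets: for w, w' ∈ W̃, if W_Σ w W_Σ = W_Σ w' W_Σ then w = w'. In particular the map W̃ → W_Σ\W/W_Σ sending w to its double coset is injective. -/

import Mathlib

/-!
Relative Coxeter groups: common definitions.

`(W, S)` is a Coxeter system (Mathlib's `CoxeterSystem M W`), `ℓ = cs.length`.
For `w : W`, `invSet cs w` is the set `T(w)` of left inversions of `w`, and
`descSet cs w = T(w) ∩ S` is `D(w)`.  For a subset `Sg ⊆ S` (playing the role of `Σ`),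
`par Sg` is the standard parabolic subgroup `W_Σ`, `parRefl Sg` its set of
reflections `T_Σ`, `minRight cs Sg = W^Σ`, `minLeft cs Sg = ^ΣW`,
`relN cs Sg Sg' = N(Σ, Σ')`, `IsLongest cs Sg w` says `w` is a longest element of `W_Σ`,
`longest cs Sg` is the longest element `w₀^Σ`, `relW cs Sg = W̃`,
`complSet cs Sg = Σ^∁`, `tilde cs Sg s = s̃ = w₀^{Σ∪{s}} w₀^Σ`, `relS cs Sg = S̃`,
`relLength cs Sg = ℓ̃ : W → ℕ∞`, and `GoodSubset cs Sg` records the standing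
hypotheses (1) and (2) on `Σ`.
-/

namespace RelativeCoxeter

variable {B W : Type*} [Group W] {M : CoxeterMatrix B}

/-- The set `S` of simple reflections of the Coxeter system. -/
def simpleSet (cs : CoxeterSystem M W) : Set W := Set.range cs.simple

/-- `T(w)`: the set of left inversions of `w`, i.e. reflections `t` with `ℓ(tw) < ℓ(w)`. -/
def invSet (cs : CoxeterSystem M W) (w : W) : Set W :=
  {t | cs.IsReflection t ∧ cs.length (t * w) < cs.length w}

/-- `D(w) = T(w) ∩ S`. -/
def descSet (cs : CoxeterSystem M W) (w : W) : Set W :=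
  invSet cs w ∩ simpleSet cs

/-- The standard parabolic subgroup `W_Σ` generated by `Σ`. -/
def par (Sg : Set W) : Subgroup W := Subgroup.closure Sg

/-- `T_Σ`: the set of reflections of the Coxeter system `(W_Σ, Σ)`. -/
def parRefl (Sg : Set W) : Set W :=
  {t | ∃ u ∈ par Sg, ∃ s ∈ Sg, t = u * s * u⁻¹}

/-- `W^Σ = {w : T(w⁻¹) ∩ T_Σ = ∅}`, minimal-length representatives of `W/W_Σ`. -/
def minRight (cs : CoxeterSystem M W) (Sg : Set W) : Set W :=
  {w | invSet cs w⁻¹ ∩ parRefl Sg = ∅}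

/-- `^ΣW = {w : T(w) ∩ T_Σ = ∅}`, minimal-length representatives of `W_Σ\W`. -/
def minLeft (cs : CoxeterSystem M W) (Sg : Set W) : Set W :=
  {w | invSet cs w ∩ parRefl Sg = ∅}

/-- `N(Σ, Σ') = {y ∈ W^Σ ∩ ^{Σ'}W : y W_Σ y⁻¹ = W_{Σ'}}`. -/
def relN (cs : CoxeterSystem M W) (Sg Sg' : Set W) : Set W :=
  {y | y ∈ minRight cs Sg ∧ y ∈ minLeft cs Sg' ∧
    (fun u => y * u * y⁻¹) '' (par Sg : Set W) = (par Sg' : Set W)}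

/-- `w` is a longest element of `W_Σ`. -/
def IsLongest (cs : CoxeterSystem M W) (Sg : Set W) (w : W) : Prop :=
  w ∈ par Sg ∧ ∀ u ∈ par Sg, cs.length u ≤ cs.length w

/-- The longest element `w₀^Σ` of `W_Σ` (defined when it exists; junk value `1` otherwise). -/
noncomputable def longest (cs : CoxeterSystem M W) (Sg : Set W) : W :=
  letI := Classical.propDecidable (∃ w, IsLongest cs Sg w)
  if h : ∃ w, IsLongest cs Sg w then h.choose else 1

/-- `W̃ = {w : w W_Σ w⁻¹ = W_Σ and T(w) ∩ T_Σ = ∅}`. -/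
def relW (cs : CoxeterSystem M W) (Sg : Set W) : Set W :=
  {w | (fun u => w * u * w⁻¹) '' (par Sg : Set W) = (par Sg : Set W) ∧
    invSet cs w ∩ parRefl Sg = ∅}

/-- `Σ^∁ = {s ∈ S ∖ Σ : W_{Σ∪{s}} is finite}`. -/
def complSet (cs : CoxeterSystem M W) (Sg : Set W) : Set W :=
  {s ∈ simpleSet cs \ Sg | ((par (Sg ∪ {s}) : Set W)).Finite}

/-- `s̃ = w₀^{Σ∪{s}} w₀^Σ`. -/
noncomputable def tilde (cs : CoxeterSystem M W) (Sg : Set W) (s : W) : W :=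
  longest cs (Sg ∪ {s}) * longest cs Sg

/-- `S̃ = {s̃ : s ∈ Σ^∁}`. -/
noncomputable def relS (cs : CoxeterSystem M W) (Sg : Set W) : Set W :=
  {w | ∃ s ∈ complSet cs Sg, w = tilde cs Sg s}

/-- `ℓ̃(w) ∈ ℕ ∪ {∞}`: the minimal `q` such that `w = w₁ ⋯ w_q` with all `w_i ∈ S̃`. -/
noncomputable def relLength (cs : CoxeterSystem M W) (Sg : Set W) (w : W) : ℕ∞ :=
  sInf {q : ℕ∞ | ∃ l : List W, (∀ x ∈ l, x ∈ relS cs Sg) ∧ l.prod = w ∧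
    (l.length : ℕ∞) = q}

/-- The standing hypotheses on `Σ`: `Σ ⊆ S`, `W_Σ` is finite, and for every `Σ'` with
`Σ ⊆ Σ' ⊆ S` and `W_{Σ'}` finite, the longest element `w₀^{Σ'}` normalises `W_Σ`. -/
def GoodSubset (cs : CoxeterSystem M W) (Sg : Set W) : Prop :=
  Sg ⊆ simpleSet cs ∧ ((par Sg : Set W)).Finite ∧
  ∀ Sg' : Set W, Sg ⊆ Sg' → Sg' ⊆ simpleSet cs → ((par Sg' : Set W)).Finite →
    ∀ w0 : W, IsLongest cs Sg' w0 →
      (fun u => w0 * u * w0⁻¹) '' (par Sg : Set W) = (par Sg : Set W)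

set_option linter.unusedSectionVars false

/-- The group of `Multiplicative (ZMod 2)`-valued functions on `W`. -/
abbrev PV (W : Type*) := W → Multiplicative (ZMod 2)

lemma two_cases (x : Multiplicative (ZMod 2)) :
    x = 1 ∨ x = Multiplicative.ofAdd 1 := by revert x; decide

lemma mul_self_eq_one (x : Multiplicative (ZMod 2)) : x * x = 1 := by revert x; decide

lemma pv_mul_self (v : PV W) : v * v = 1 := by
  funext t; exact mul_self_eq_one (v t)

/-- Dirac delta at `x`. -/
noncomputable def pdelta (x : W) : PV W := fun t =>
  letI := Classical.decEq W
  if t = x then Multiplicative.ofAdd 1 else 1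

@[simp] lemma pdelta_self (x : W) : pdelta x x = Multiplicative.ofAdd 1 := by
  simp [pdelta]

lemma pdelta_ne (x t : W) (h : t ≠ x) : pdelta x t = 1 := by
  simp [pdelta, h]

/-- Conjugation action of `W` on `PV W`. -/
def conjAct : W →* MulAut (PV W) where
  toFun w :=
    { toFun := fun v t => v (w⁻¹ * t * w)
      invFun := fun v t => v (w * t * w⁻¹)
      left_inv := fun v => by funext t; group
      right_inv := fun v => by funext t; group
      map_mul' := fun v₁ v₂ => rfl }
  map_one' := by ext v t; simp
  map_mul' x y := by ext v t; simp [mul_assoc]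

@[simp] lemma conjAct_apply (w : W) (v : PV W) (t : W) :
    conjAct w v t = v (w⁻¹ * t * w) := rfl

lemma conjAct_pdelta (w x : W) : conjAct w (pdelta x) = pdelta (w * x * w⁻¹) := by
  funext t
  by_cases h : t = w * x * w⁻¹
  · rw [h, pdelta_self, conjAct_apply]
    have : w⁻¹ * (w * x * w⁻¹) * w = x := by group
    rw [this, pdelta_self]
  · rw [pdelta_ne _ _ h, conjAct_apply, pdelta_ne]
    intro hc
    apply h
    rw [← hc]
    group

section DihedralIdentities

variable {q σ : W} (h : q * σ * q = σ)

include h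

lemma dih_K (a : ℕ) : q ^ a * σ * q ^ a = σ := by
  induction a with
  | zero => simp
  | succ a ih =>
    nth_rewrite 1 [pow_succ']
    nth_rewrite 1 [pow_succ]
    calc q * q ^ a * σ * (q ^ a * q) = q * (q ^ a * σ * q ^ a) * q := by
          simp [mul_assoc]
      _ = q * σ * q := by rw [ih]
      _ = σ := h

lemma dih_K2 (a : ℕ) : q ^ a * σ = σ * (q ^ a)⁻¹ :=
  eq_mul_inv_of_mul_eq (dih_K h a)

lemma dih_G1 (a : ℕ) : q ^ a * σ * (q ^ a)⁻¹ = σ * (q ^ (2 * a))⁻¹ := by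
  rw [dih_K2 h a, mul_assoc, ← mul_inv_rev, ← pow_add, two_mul]

lemma dih_G2 (a : ℕ) : q ^ a * (q * σ) * (q ^ a)⁻¹ = σ * (q ^ (2 * a + 1))⁻¹ := by
  have h1 : q ^ a * (q * σ) = q ^ (a + 1) * σ := by rw [pow_succ, mul_assoc]
  rw [h1, dih_K2 h (a + 1), mul_assoc, ← mul_inv_rev, ← pow_add,
    show a + (a + 1) = 2 * a + 1 by omega]

end DihedralIdentities

variable (cs : CoxeterSystem M W)

open CoxeterSystem List

local prefix:100 "s" => cs.simple
local prefix:100 "π" => cs.wordProd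
local prefix:100 "ℓ" => cs.length
local prefix:100 "lis" => cs.leftInvSeq

/-- The target group of the parity representation. -/
abbrev G (W : Type*) [Group W] := SemidirectProduct (PV W) W conjAct

noncomputable def gen (i : B) : G W := ⟨pdelta (s i), s i⟩

lemma dih_base (i j : B) : (s i * s j) * s i * (s i * s j) = s i := by
  have : (s i * s j) * s i * (s i * s j) = s i * (s j * (s i * (s i * s j))) := by
    simp [mul_assoc]
  rw [this, cs.simple_mul_simple_cancel_left, cs.simple_mul_simple_self, mul_one]

lemma gen_mul_left (i j : B) :
    (gen cs i * gen cs j).left = pdelta (s i) * pdelta ((s i * s j) * s i) := by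
  show pdelta (s i) * conjAct (s i) (pdelta (s j)) = _
  rw [conjAct_pdelta, cs.inv_simple]

lemma key_pow (i j : B) (n : ℕ) :
    (gen cs i * gen cs j) ^ n =
      ⟨∏ k ∈ Finset.range (2 * n), pdelta (s i * ((s i * s j) ^ k)⁻¹),
        (s i * s j) ^ n⟩ := by
  have hbase := dih_base cs i j
  induction n with
  | zero =>
    rw [pow_zero]
    have : (1 : G W) = ⟨1, 1⟩ := rfl
    rw [this]
    congr 1 <;> simp
  | succ n ih =>
    rw [pow_succ, ih]
    have hmul : ∀ (a b : G W), a * b = ⟨a.left * conjAct a.right b.left, a.right * b.right⟩ :=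
      fun a b => rfl
    rw [hmul]
    congr 1
    · show (∏ k ∈ Finset.range (2 * n), pdelta (s i * ((s i * s j) ^ k)⁻¹))
          * conjAct ((s i * s j) ^ n) ((gen cs i * gen cs j).left) = _
      rw [gen_mul_left, map_mul, conjAct_pdelta, conjAct_pdelta]
      rw [show (s i * s j) * s i = (s i * s j) * s i by rfl]
      rw [dih_G1 hbase, dih_G2 hbase]
      rw [show 2 * (n + 1) = (2 * n) + 1 + 1 by omega]
      rw [Finset.prod_range_succ, Finset.prod_range_succ, mul_assoc]
    · show (s i * s j) ^ n * (s i * s j) = _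
      rw [← pow_succ]

lemma key (i j : B) : ((fun i => gen cs i) i * (fun i => gen cs i) j) ^ M.M i j = 1 := by
  show (gen cs i * gen cs j) ^ M.M i j = 1
  rw [key_pow]
  have hq : (s i * s j) ^ M.M i j = 1 := cs.simple_mul_simple_pow i j
  have hper : ∀ k : ℕ, s i * ((s i * s j) ^ (M.M i j + k))⁻¹ = s i * ((s i * s j) ^ k)⁻¹ := by
    intro k
    rw [pow_add, hq, one_mul]
  have h1 : (1 : G W) = ⟨1, 1⟩ := rfl
  rw [h1]
  congr 1
  · rw [show 2 * M.M i j = M.M i j + M.M i j by omega, Finset.prod_range_add]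
    simp_rw [hper]
    rw [← Finset.prod_mul_distrib]
    apply Finset.prod_eq_one
    intro k _
    exact pv_mul_self _

/-- The parity representation `W →* PV W ⋊ W`. -/
noncomputable def theta : W →* G W := cs.lift ⟨fun i => gen cs i, key cs⟩

@[simp] lemma theta_simple (i : B) : theta cs (s i) = gen cs i :=
  cs.lift_apply_simple (key cs) i

lemma theta_right (w : W) : (theta cs w).right = w := by
  have : SemidirectProduct.rightHom.comp (theta cs) = MonoidHom.id W := by
    apply cs.ext_simple
    intro i
    simp [gen]
  calc (theta cs w).right = (SemidirectProduct.rightHom.comp (theta cs)) w := rfl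
    _ = w := by rw [this]; rfl

/-- `nu cs w t` is the parity of the number of occurrences of `t` in any
left inversion sequence of a word for `w`. -/
noncomputable def nu (w : W) : PV W := (theta cs w).left

lemma nu_mul (x y : W) : nu cs (x * y) = nu cs x * conjAct x (nu cs y) := by
  unfold nu
  rw [map_mul, SemidirectProduct.mul_left, theta_right]

@[simp] lemma nu_one : nu cs 1 = 1 := by
  unfold nu
  rw [map_one]
  rfl

lemma nu_simple (i : B) : nu cs (s i) = pdelta (s i) := by
  unfold nu
  rw [theta_simple]
  rfl


lemma pv_inv_eq_self (v : PV W) : v⁻¹ = v :=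
  inv_eq_of_mul_eq_one_right (pv_mul_self v)

lemma pv_mul_apply (v₁ v₂ : PV W) (t : W) : (v₁ * v₂) t = v₁ t * v₂ t := rfl

lemma nu_wordProd (ω : List B) : nu cs (π ω) = ((lis ω).map pdelta).prod := by
  induction ω with
  | nil =>
    rw [cs.wordProd_nil]
    simp
  | cons i ω ih =>
    rw [cs.wordProd_cons, nu_mul, nu_simple, ih]
    have hlis : lis (i :: ω) = s i :: (lis ω).map (MulAut.conj (s i)) := rfl
    rw [hlis, List.map_cons, List.prod_cons]
    congr 1
    rw [map_list_prod (conjAct (s i) : PV W ≃* PV W), List.map_map, List.map_map]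
    congr 1
    apply List.map_congr_left
    intro x _
    show conjAct (s i) (pdelta x) = pdelta (MulAut.conj (s i) x)
    rw [conjAct_pdelta, MulAut.conj_apply]

lemma prod_map_pdelta_apply_of_not_mem {l : List W} {t : W} (h : t ∉ l) :
    ((l.map pdelta).prod) t = 1 := by
  induction l with
  | nil => rfl
  | cons x l ih =>
    rw [List.map_cons, List.prod_cons, pv_mul_apply,
      pdelta_ne x t (fun hc => h (hc ▸ List.mem_cons_self (a := x) (l := l))),
      ih (fun hc => h (List.mem_cons_of_mem x hc)), mul_one]

lemma conjAct_nu_inv (w : W) : conjAct w (nu cs w⁻¹) = nu cs w := by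
  have h1 : nu cs w * conjAct w (nu cs w⁻¹) = 1 := by
    rw [← nu_mul, mul_inv_cancel, nu_one]
  calc conjAct w (nu cs w⁻¹) = (nu cs w)⁻¹ := by
        rw [inv_eq_of_mul_eq_one_right h1]
    _ = nu cs w := pv_inv_eq_self _

lemma nu_refl_self {t : W} (ht : cs.IsReflection t) :
    nu cs t t = Multiplicative.ofAdd 1 := by
  obtain ⟨w, i, rfl⟩ := ht
  have key2 : ∀ a b : Multiplicative (ZMod 2), a * (b * a) = b := by decide
  have h1 : w * s i * w⁻¹ = w * (s i * w⁻¹) := by group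
  rw [h1, nu_mul, nu_mul, nu_simple]
  rw [pv_mul_apply]
  have h2 : conjAct w (pdelta (s i) * conjAct (s i) (nu cs w⁻¹)) (w * (s i * w⁻¹))
      = pdelta (s i) (w⁻¹ * (w * (s i * w⁻¹)) * w)
        * nu cs w⁻¹ ((s i)⁻¹ * (w⁻¹ * (w * (s i * w⁻¹)) * w) * s i) := rfl
  rw [h2]
  have h3 : w⁻¹ * (w * (s i * w⁻¹)) * w = s i := by group
  rw [h3, pdelta_self, cs.inv_simple,
    show s i * s i * s i = s i by rw [cs.simple_mul_simple_self, one_mul]]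
  have h4 : nu cs w⁻¹ (s i) = nu cs w (w * (s i * w⁻¹)) := by
    have := congrFun (conjAct_nu_inv cs w) (w * (s i * w⁻¹))
    rw [conjAct_apply, h3] at this
    exact this
  rw [h4]
  exact key2 _ _

lemma isLeftInversion_iff_nu {t : W} (ht : cs.IsReflection t) (w : W) :
    cs.IsLeftInversion w t ↔ nu cs w t = Multiplicative.ofAdd 1 := by
  have hdec : (1 : Multiplicative (ZMod 2)) ≠ Multiplicative.ofAdd 1 := by decide
  constructor
  · intro h
    rcases two_cases (nu cs w t) with h1 | h1
    · exfalso
      have h2 : nu cs (t * w) t = Multiplicative.ofAdd 1 := by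
        rw [nu_mul, pv_mul_apply, nu_refl_self cs ht, conjAct_apply]
        have : t⁻¹ * t * t = t := by group
        rw [this, h1, mul_one]
      -- now t is a left inversion of t * w, i.e. ℓ (t * (t * w)) < ℓ (t * w)
      have h3 : cs.IsLeftInversion (t * w) t := by
        obtain ⟨ω, hred, hw⟩ := cs.exists_reduced_word' (t * w)
        have hmem : t ∈ lis ω := by
          by_contra hmem
          rw [hw, nu_wordProd] at h2
          rw [prod_map_pdelta_apply_of_not_mem hmem] at h2
          exact hdec h2
        rw [hw]
        exact cs.isLeftInversion_of_mem_leftInvSeq hred hmem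
      have h4 : ℓ (t * (t * w)) < ℓ (t * w) := h3.2
      rw [← mul_assoc, ht.mul_self, one_mul] at h4
      exact Nat.lt_asymm h.2 h4
    · exact h1
  · intro h
    obtain ⟨ω, hred, hw⟩ := cs.exists_reduced_word' w
    have hmem : t ∈ lis ω := by
      by_contra hmem
      rw [hw, nu_wordProd] at h
      rw [prod_map_pdelta_apply_of_not_mem hmem] at h
      exact hdec h
    rw [hw]
    exact cs.isLeftInversion_of_mem_leftInvSeq hred hmem

/-- Strong exchange, membership form. -/
lemma mem_leftInvSeq_of_isLeftInversion {ω : List B} (hred : cs.IsReduced ω) {t : W}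
    (h : cs.IsLeftInversion (π ω) t) : t ∈ lis ω := by
  have h1 : nu cs (π ω) t = Multiplicative.ofAdd 1 := (isLeftInversion_iff_nu cs h.1 _).mp h
  by_contra hmem
  rw [nu_wordProd, prod_map_pdelta_apply_of_not_mem hmem] at h1
  exact (by decide : (1 : Multiplicative (ZMod 2)) ≠ Multiplicative.ofAdd 1) h1

/-- Strong exchange, erase form. -/
lemma exists_eraseIdx_of_isLeftInversion {ω : List B} (hred : cs.IsReduced ω) {t : W}
    (h : cs.IsLeftInversion (π ω) t) :
    ∃ j, j < ω.length ∧ t * π ω = π (ω.eraseIdx j) ∧ t = (lis ω).getD j 1 := by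
  have hmem := mem_leftInvSeq_of_isLeftInversion cs hred h
  obtain ⟨j, hj, hg⟩ := List.mem_iff_getElem.mp hmem
  rw [cs.length_leftInvSeq] at hj
  have hgd : (lis ω).getD j 1 = t := by
    rw [List.getD_eq_getElem _ _ (by rw [cs.length_leftInvSeq]; exact hj)]
    exact hg
  refine ⟨j, hj, ?_, hgd.symm⟩
  rw [← hgd]
  exact cs.getD_leftInvSeq_mul_wordProd ω j





/-! ### Parabolic subgroup lemmas -/

section Parabolic

variable {Sg : Set W}

lemma wordProd_mem_par {ω : List B} (hω : ∀ i ∈ ω, s i ∈ Sg) : π ω ∈ par Sg := by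
  induction ω with
  | nil => rw [cs.wordProd_nil]; exact one_mem _
  | cons i ω ih =>
    rw [cs.wordProd_cons]
    exact mul_mem (Subgroup.subset_closure (hω i (List.mem_cons_self (a := i) (l := ω))))
      (ih fun j hj => hω j (List.mem_cons_of_mem _ hj))

lemma exists_word_of_mem_par (hS : Sg ⊆ simpleSet cs) {u : W} (hu : u ∈ par Sg) :
    ∃ ω : List B, (∀ i ∈ ω, s i ∈ Sg) ∧ π ω = u := by
  induction hu using Subgroup.closure_induction with
  | mem x hx =>
    obtain ⟨i, hi⟩ := hS hx
    exact ⟨[i], by simpa [hi] using hx, by simp [hi]⟩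
  | one => exact ⟨[], by simp, cs.wordProd_nil⟩
  | mul x y hx hy ihx ihy =>
    obtain ⟨ω₁, h₁, hp₁⟩ := ihx
    obtain ⟨ω₂, h₂, hp₂⟩ := ihy
    refine ⟨ω₁ ++ ω₂, ?_, by rw [cs.wordProd_append, hp₁, hp₂]⟩
    intro i hi
    rcases List.mem_append.mp hi with h | h
    · exact h₁ i h
    · exact h₂ i h
  | inv x hx ihx =>
    obtain ⟨ω, h, hp⟩ := ihx
    exact ⟨ω.reverse, fun i hi => h i (List.mem_reverse.mp hi),
      by rw [cs.wordProd_reverse, hp]⟩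

lemma exists_shorter_word (ω : List B) (hnr : ¬ cs.IsReduced ω) :
    ∃ ω' : List B, ω'.length + 2 = ω.length ∧ π ω' = π ω ∧ ∀ i ∈ ω', i ∈ ω := by
  induction ω with
  | nil => exact absurd (by simp [CoxeterSystem.IsReduced]) hnr
  | cons i ψ ih =>
    by_cases hψ : cs.IsReduced ψ
    · have hlt : ℓ (s i * π ψ) < ℓ (π ψ) := by
        have h1 : ℓ (π (i :: ψ)) ≤ (i :: ψ).length := cs.length_wordProd_le _
        have h1' : ℓ (π (i :: ψ)) ≠ (i :: ψ).length := hnr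
        have h2 := cs.length_simple_mul_ne (π ψ) i
        rw [cs.wordProd_cons] at h1 h1'
        have h3 : ℓ (π ψ) = ψ.length := hψ
        simp only [List.length_cons] at h1 h1'
        omega
      obtain ⟨j, hj, heq, -⟩ := exists_eraseIdx_of_isLeftInversion cs hψ
        ⟨cs.isReflection_simple i, hlt⟩
      refine ⟨ψ.eraseIdx j, ?_, ?_, ?_⟩
      · have := List.length_eraseIdx_add_one hj
        simp only [List.length_cons]
        omega
      · rw [cs.wordProd_cons, ← heq]
      · intro x hx
        exact List.mem_cons_of_mem _ (List.mem_of_mem_eraseIdx hx)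
    · obtain ⟨ψ', hlen, hprod, hsub⟩ := ih hψ
      refine ⟨i :: ψ', by simp only [List.length_cons]; omega,
        by rw [cs.wordProd_cons, cs.wordProd_cons, hprod], ?_⟩
      intro x hx
      rcases List.mem_cons.mp hx with h | h
      · exact h ▸ List.mem_cons_self (a := i) (l := ψ)
      · exact List.mem_cons_of_mem _ (hsub x h)

lemma exists_reduced_word_subset (ω : List B) :
    ∃ ω', cs.IsReduced ω' ∧ π ω' = π ω ∧ ∀ i ∈ ω', i ∈ ω := by
  generalize hn : ω.length = n
  induction n using Nat.strong_induction_on generalizing ω with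
  | _ n IH =>
    by_cases hred : cs.IsReduced ω
    · exact ⟨ω, hred, rfl, fun i hi => hi⟩
    · obtain ⟨ω₂, hlen, hprod, hsub⟩ := exists_shorter_word cs ω hred
      obtain ⟨ω', h1, h2, h3⟩ := IH ω₂.length (by omega) ω₂ rfl
      exact ⟨ω', h1, h2.trans hprod, fun i hi => hsub i (h3 i hi)⟩

lemma exists_reduced_sgword (hS : Sg ⊆ simpleSet cs) {u : W} (hu : u ∈ par Sg) :
    ∃ ω : List B, cs.IsReduced ω ∧ (∀ i ∈ ω, s i ∈ Sg) ∧ π ω = u := by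
  obtain ⟨ω, hω, hp⟩ := exists_word_of_mem_par cs hS hu
  obtain ⟨ω', h1, h2, h3⟩ := exists_reduced_word_subset cs ω
  exact ⟨ω', h1, fun i hi => hω i (h3 i hi), h2.trans hp⟩

lemma parRefl_subset_par : parRefl Sg ⊆ (par Sg : Set W) := by
  rintro t ⟨u, hu, x, hx, rfl⟩
  exact mul_mem (mul_mem hu (Subgroup.subset_closure hx)) (inv_mem hu)

lemma mem_parRefl_of_mem_leftInvSeq {ω : List B} (hω : ∀ i ∈ ω, s i ∈ Sg) {t : W}
    (ht : t ∈ lis ω) : t ∈ parRefl Sg := by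
  obtain ⟨j, hj, rfl⟩ := List.mem_iff_getElem.mp ht
  rw [cs.length_leftInvSeq] at hj
  have hgd : (lis ω)[j] = (lis ω).getD j 1 := by
    rw [List.getD_eq_getElem _ _ (by rw [cs.length_leftInvSeq]; exact hj)]
  rw [hgd, cs.getD_leftInvSeq]
  have hget : ω[j]? = some ω[j] := by
    rw [List.getElem?_eq_getElem hj]
  rw [hget]
  refine ⟨π (ω.take j), wordProd_mem_par cs fun i hi => hω i (List.mem_of_mem_take hi),
    s ω[j], hω _ (List.getElem_mem hj), rfl⟩

lemma refl_mem_parRefl (hS : Sg ⊆ simpleSet cs) {t : W} (ht : cs.IsReflection t)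
    (htp : t ∈ par Sg) : t ∈ parRefl Sg := by
  obtain ⟨ω, hred, hω, hp⟩ := exists_reduced_sgword cs hS htp
  have hinv : cs.IsLeftInversion (π ω) t := by
    refine ⟨ht, ?_⟩
    rw [hp, ht.mul_self, cs.length_one]
    obtain ⟨k, hk⟩ := ht.odd_length
    omega
  exact mem_parRefl_of_mem_leftInvSeq cs hω
    (mem_leftInvSeq_of_isLeftInversion cs hred hinv)


lemma length_wordProd_mul_of_minLeft {w : W} (hw : invSet cs w ∩ parRefl Sg = ∅)
    {ω : List B} (hred : cs.IsReduced ω) (hω : ∀ i ∈ ω, s i ∈ Sg) :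
    ℓ (π ω * w) = ω.length + ℓ w := by
  induction ω with
  | nil => simp [cs.wordProd_nil]
  | cons i ψ ih =>
    have hψred : cs.IsReduced ψ := by
      have := CoxeterSystem.IsReduced.drop hred 1
      simpa using this
    have hIH : ℓ (π ψ * w) = ψ.length + ℓ w :=
      ih hψred (fun j hj => hω j (List.mem_cons_of_mem _ hj))
    have hcons : π (i :: ψ) * w = s i * (π ψ * w) := by
      rw [cs.wordProd_cons, mul_assoc]
    rcases cs.length_simple_mul (π ψ * w) i with hup | hdown
    · rw [hcons, hup, hIH, List.length_cons]
      omega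
    · -- the descent case leads to a contradiction
      exfalso
      have hlt : ℓ (s i * (π ψ * w)) < ℓ (π ψ * w) := by omega
      obtain ⟨ν, hνred, hνw⟩ := cs.exists_reduced_word' w
      have happ : π (ψ ++ ν) = π ψ * w := by
        rw [cs.wordProd_append, ← hνw]
      have happred : cs.IsReduced (ψ ++ ν) := by
        unfold CoxeterSystem.IsReduced
        rw [happ, hIH, List.length_append, hνw, hνred]
      have hinv : cs.IsLeftInversion (π (ψ ++ ν)) (s i) := by
        rw [happ]
        exact ⟨cs.isReflection_simple i, hlt⟩
      obtain ⟨j, hj, heq, -⟩ := exists_eraseIdx_of_isLeftInversion cs happred hinv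
      rcases lt_or_ge j ψ.length with hcase | hcase
      · -- deletion happens in the ψ part: contradicts reducedness of i :: ψ
        rw [List.eraseIdx_append_of_lt_length hcase ν, happ, cs.wordProd_append,
          ← hνw, ← mul_assoc] at heq
        have hcan : s i * π ψ = π (ψ.eraseIdx j) := mul_right_cancel heq
        have h1 : ℓ (π (i :: ψ)) = ψ.length + 1 := by
          rw [hred]; simp
        have h2 : ℓ (π (i :: ψ)) ≤ ψ.length - 1 := by
          rw [cs.wordProd_cons, hcan]
          calc ℓ (π (ψ.eraseIdx j)) ≤ (ψ.eraseIdx j).length := cs.length_wordProd_le _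
            _ = ψ.length - 1 := by
                have := List.length_eraseIdx_add_one hcase
                omega
        omega
      · -- deletion happens in the ν part: contradicts w ∈ minLeft
        rw [List.eraseIdx_append_of_length_le hcase ν, happ, cs.wordProd_append] at heq
        set t' := (π ψ)⁻¹ * s i * π ψ with ht'def
        have heq2 : t' * w = π (ν.eraseIdx (j - ψ.length)) := by
          rw [ht'def]
          calc (π ψ)⁻¹ * s i * π ψ * w
              = (π ψ)⁻¹ * (s i * (π ψ * w)) := by group
            _ = (π ψ)⁻¹ * (π ψ * π (ν.eraseIdx (j - ψ.length))) := by rw [heq]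
            _ = π (ν.eraseIdx (j - ψ.length)) := by group
        have hlen : j - ψ.length < ν.length := by
          rw [List.length_append] at hj
          omega
        have hlt2 : ℓ (t' * w) < ℓ w := by
          rw [heq2]
          calc ℓ (π (ν.eraseIdx (j - ψ.length))) ≤ (ν.eraseIdx (j - ψ.length)).length :=
                cs.length_wordProd_le _
            _ < ν.length := by
                have := List.length_eraseIdx_add_one hlen
                omega
            _ = ℓ w := by rw [hνw]; exact hνred.symm ▸ rfl
        have hrefl : cs.IsReflection t' := by
          have := (cs.isReflection_simple i).conj (π ψ)⁻¹
          rwa [inv_inv] at this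
        have hmem : t' ∈ invSet cs w ∩ parRefl Sg := by
          constructor
          · exact ⟨hrefl, hlt2⟩
          · refine ⟨(π ψ)⁻¹, inv_mem (wordProd_mem_par cs
              (fun j hj => hω j (List.mem_cons_of_mem _ hj))), s i,
              hω i (List.mem_cons_self (a := i) (l := ψ)), ?_⟩
            rw [inv_inv]
        rw [hw] at hmem
        exact hmem

lemma length_par_mul (hS : Sg ⊆ simpleSet cs) {w : W}
    (hw : invSet cs w ∩ parRefl Sg = ∅) {u : W} (hu : u ∈ par Sg) :
    ℓ (u * w) = ℓ u + ℓ w := by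
  obtain ⟨ω, hred, hω, hp⟩ := exists_reduced_sgword cs hS hu
  rw [← hp, length_wordProd_mul_of_minLeft cs hw hred hω, hred]


end Parabolic

/-- every `w ∈ W̃` lies in `^ΣW ∩ W^Σ` and is the minimal-length
representative of its double coset `W_Σ w W_Σ`; distinct elements of `W̃` lie in
distinct double cosets. -/
theorem relW_minimal_double_coset (Sg : Set W) (hSg : GoodSubset cs Sg) :
    (∀ w ∈ relW cs Sg, w ∈ minLeft cs Sg ∧ w ∈ minRight cs Sg ∧
      ∀ u ∈ par Sg, ∀ v ∈ par Sg, cs.length w ≤ cs.length (u * w * v)) ∧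
    (∀ w ∈ relW cs Sg, ∀ w' ∈ relW cs Sg,
      (∃ u ∈ par Sg, ∃ v ∈ par Sg, w' = u * w * v) → w = w') := by
  obtain ⟨hS, -, -⟩ := hSg
  have hconj : ∀ {w : W}, (fun u => w * u * w⁻¹) '' (par Sg : Set W) = (par Sg : Set W) →
      ∀ {v : W}, v ∈ par Sg → w * v * w⁻¹ ∈ par Sg := by
    intro w hn v hv
    have h1 : w * v * w⁻¹ ∈ ((fun u => w * u * w⁻¹) '' (par Sg : Set W)) := ⟨v, hv, rfl⟩
    rw [hn] at h1
    exact h1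
  have hminR : ∀ w ∈ relW cs Sg, w ∈ minRight cs Sg := by
    intro w hw
    obtain ⟨hnorm, hmin⟩ := hw
    show invSet cs w⁻¹ ∩ parRefl Sg = ∅
    rw [Set.eq_empty_iff_forall_notMem]
    rintro t ⟨⟨htrefl, htlen⟩, htp⟩
    set t' := w * t * w⁻¹ with ht'
    have h1 : t' * w = w * t := by rw [ht']; group
    have h2 : ℓ (t' * w) < ℓ w := by
      rw [h1]
      have h2a : ℓ (w * t) = ℓ (t * w⁻¹) := by
        rw [← cs.length_inv (w * t), mul_inv_rev, htrefl.inv]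
      rw [h2a]
      calc ℓ (t * w⁻¹) < ℓ w⁻¹ := htlen
        _ = ℓ w := cs.length_inv w
    have h3 : cs.IsReflection t' := htrefl.conj w
    have h4 : t' ∈ par Sg := hconj hnorm (parRefl_subset_par htp)
    have h5 : t' ∈ parRefl Sg := refl_mem_parRefl cs hS h3 h4
    have h6 : t' ∈ invSet cs w ∩ parRefl Sg := ⟨⟨h3, h2⟩, h5⟩
    rw [hmin] at h6
    exact h6
  constructor
  · intro w hw
    refine ⟨hw.2, hminR w hw, ?_⟩
    intro u hu v hv
    have huv : u * w * v = (u * (w * v * w⁻¹)) * w := by group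
    have hu' : u * (w * v * w⁻¹) ∈ par Sg := mul_mem hu (hconj hw.1 hv)
    rw [huv, length_par_mul cs hS hw.2 hu']
    omega
  · rintro w hw w' hw' ⟨u, hu, v, hv, rfl⟩
    have huv : u * w * v = (u * (w * v * w⁻¹)) * w := by group
    set u'' := u * (w * v * w⁻¹) with hu''def
    have hu'' : u'' ∈ par Sg := mul_mem hu (hconj hw.1 hv)
    have h1 : ℓ (u * w * v) = ℓ u'' + ℓ w := by
      rw [huv]
      exact length_par_mul cs hS hw.2 hu''
    have h2 : w = u''⁻¹ * (u * w * v) := by rw [huv]; group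
    have h3 : ℓ w = ℓ u'' + ℓ (u * w * v) := by
      conv_lhs => rw [h2]
      rw [length_par_mul cs hS hw'.2 (inv_mem hu''), cs.length_inv]
    have h4 : ℓ u'' = 0 := by omega
    have h5 : u'' = 1 := cs.length_eq_zero_iff.mp h4
    rw [huv, h5, one_mul]

end RelativeCoxeter
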